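/- Consider the block matrix A = [[B, x, O],[yᵀ, α, wᵀ],[Oᵀ, z, C]] with B, C square and O zero blocks. Suppose yᵀ is in the row space of B but x is not in the column space of B. If wᵀ is in the row space of C, then rank(A) = rank(B) + rank(C) + 1; if wᵀ is not in the row space of C, then rank(A) = rank(B) + rank(C) + 2. -/

import Mathlib

open Matrix

section helpers
variable {F : Type*} [Field F] {m k : ℕ}

lemma aux_finrank_sup_span {F V : Type*} [Field F] [AddCommGroup V] [Module F V]
    [FiniteDimensional F V] (s : Submodule F V) {v : V} (hv : v ∉ s) :
    Module.finrank F ↥(s ⊔ Submodule.span F {v}) = Module.finrank F ↥s + 1 := by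
  have hv0 : v ≠ 0 := fun h => hv (h ▸ s.zero_mem)
  have hinf : s ⊓ Submodule.span F {v} = ⊥ := by
    rw [Submodule.eq_bot_iff]
    rintro u ⟨hus, huv⟩
    obtain ⟨c, rfl⟩ := Submodule.mem_span_singleton.mp huv
    rcases eq_or_ne c 0 with rfl | hc
    · simp
    · exact absurd (by simpa [smul_smul, inv_mul_cancel₀ hc] using s.smul_mem c⁻¹ hus) hv
  have h := Submodule.finrank_sup_add_finrank_inf_eq s (Submodule.span F {v})
  rw [hinf, finrank_bot, finrank_span_singleton hv0] at h
  omega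

lemma aux_e_mem (B : Matrix (Fin m) (Fin m) F) (x : Fin m → F)
    (hx : x ∉ Submodule.span F (Set.range Bᵀ)) :
    (Sum.elim (0 : Fin m → F) (fun _ : Fin 1 => (1:F)) : Fin m ⊕ Fin 1 → F) ∈
      Submodule.span F (Set.range (fun i => Sum.elim (B i) (fun _ : Fin 1 => x i))) := by
  obtain ⟨f, hfx, hker⟩ :=
    (Submodule.span F (Set.range Bᵀ)).exists_dual_map_eq_bot_of_notMem hx inferInstance
  have h0 : ∀ u ∈ Submodule.span F (Set.range Bᵀ), f u = 0 := by
    intro u hu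
    have : f u ∈ (Submodule.span F (Set.range Bᵀ)).map f := Submodule.mem_map_of_mem hu
    rwa [hker, Submodule.mem_bot] at this
  set d : Fin m → F := fun i => f (fun j => if i = j then 1 else 0) with hd
  have hsum : ∀ u : Fin m → F, f u = ∑ i, u i * d i := by
    intro u
    simpa [smul_eq_mul] using LinearMap.pi_apply_eq_sum_univ f u
  have hmem : ((f x)⁻¹ • ∑ i, d i • (Sum.elim (B i) (fun _ : Fin 1 => x i) : Fin m ⊕ Fin 1 → F))
      ∈ Submodule.span F (Set.range (fun i => Sum.elim (B i) (fun _ : Fin 1 => x i))) := by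
    refine Submodule.smul_mem _ _ (Submodule.sum_mem _ fun i _ => Submodule.smul_mem _ _ ?_)
    exact Submodule.subset_span ⟨i, rfl⟩
  have heq : ((f x)⁻¹ • ∑ i, d i • (Sum.elim (B i) (fun _ : Fin 1 => x i) : Fin m ⊕ Fin 1 → F))
      = Sum.elim (0 : Fin m → F) (fun _ : Fin 1 => (1:F)) := by
    funext j
    rcases j with j | o
    · have : f (Bᵀ j) = 0 := h0 _ (Submodule.subset_span ⟨j, rfl⟩)
      rw [hsum] at this
      simp only [Pi.smul_apply, Finset.sum_apply, Pi.smul_apply, Sum.elim_inl, smul_eq_mul]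
      simp only [transpose_apply] at this
      rw [Finset.sum_congr rfl fun i _ => mul_comm (d i) (B i j)]
      rw [this, mul_zero]; simp
    · simp only [Pi.smul_apply, Finset.sum_apply, Pi.smul_apply, Sum.elim_inr, smul_eq_mul]
      rw [Finset.sum_congr rfl fun i _ => mul_comm (d i) (x i), ← hsum]
      exact inv_mul_cancel₀ hfx
  rwa [heq] at hmem

def Lmap (F : Type*) [Field F] (m k : ℕ) :
    ((Fin m ⊕ Fin 1) → F) →ₗ[F] ((Fin m ⊕ (Fin 1 ⊕ Fin k)) → F) where
  toFun g := Sum.elim (fun i => g (Sum.inl i)) (Sum.elim (fun j => g (Sum.inr j)) 0)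
  map_add' a b := by funext j; rcases j with j | j | j <;> simp
  map_smul' c a := by funext j; rcases j with j | j | j <;> simp

def Rmap (F : Type*) [Field F] (m k : ℕ) :
    ((Fin k) → F) →ₗ[F] ((Fin m ⊕ (Fin 1 ⊕ Fin k)) → F) where
  toFun v := Sum.elim 0 (Sum.elim 0 v)
  map_add' a b := by funext j; rcases j with j | j | j <;> simp
  map_smul' c a := by funext j; rcases j with j | j | j <;> simp

lemma Lmap_inj : Function.Injective (Lmap F m k) := by
  intro a b hab
  funext j
  rcases j with j | j
  · exact congrFun hab (Sum.inl j)
  · exact congrFun hab (Sum.inr (Sum.inl j))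

lemma Rmap_inj : Function.Injective (Rmap F m k) := by
  intro a b hab
  funext j
  exact congrFun hab (Sum.inr (Sum.inr j))

end helpers

theorem stmt_11 {F : Type*} [Field F] {m k : ℕ}
    (B : Matrix (Fin m) (Fin m) F) (C : Matrix (Fin k) (Fin k) F)
    (x y : Fin m → F) (w z : Fin k → F) (α : F)
    (A : Matrix (Fin m ⊕ (Fin 1 ⊕ Fin k)) (Fin m ⊕ (Fin 1 ⊕ Fin k)) F)
    (hA : A = Matrix.fromBlocks B
      (Matrix.of fun i j => Sum.elim (fun (_ : Fin 1) => x i) (fun (_ : Fin k) => (0 : F)) j)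
      (Matrix.of fun i j => Sum.elim (fun (_ : Fin 1) => y j) (fun (_ : Fin k) => (0 : F)) i)
      (Matrix.fromBlocks (Matrix.of fun (_ : Fin 1) (_ : Fin 1) => α)
        (Matrix.of fun (_ : Fin 1) j => w j) (Matrix.of fun i (_ : Fin 1) => z i) C))
    (hx : x ∉ Submodule.span F (Set.range Bᵀ))
    (hy : y ∈ Submodule.span F (Set.range B)) :
    (w ∈ Submodule.span F (Set.range C) → A.rank = B.rank + C.rank + 1) ∧
    (w ∉ Submodule.span F (Set.range C) → A.rank = B.rank + C.rank + 2) := by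
  classical
  set M : Matrix (Fin m) (Fin m ⊕ Fin 1) F :=
    Matrix.of (fun i => Sum.elim (B i) (fun _ : Fin 1 => x i)) with hM
  set e₂ : Fin m ⊕ Fin 1 → F := Sum.elim 0 (fun _ => 1) with he₂def
  have he₂ : e₂ ∈ Submodule.span F (Set.range M) := aux_e_mem B x hx
  set L := Lmap F m k with hLdef
  set R := Rmap F m k with hRdef
  set U : Submodule F ((Fin m ⊕ (Fin 1 ⊕ Fin k)) → F) :=
    (Submodule.span F (Set.range M)).map L with hUdef
  set V : Submodule F ((Fin m ⊕ (Fin 1 ⊕ Fin k)) → F) :=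
    (Submodule.span F (Set.range C ∪ {w})).map R with hVdef
  -- row computations
  have hrow1 : ∀ i, A (Sum.inl i) = L (M i) := by
    intro i; funext j; rcases j with j | j | j <;>
      simp [hA, hLdef, Lmap, hM]
  have hrow2 : ∀ o : Fin 1, A (Sum.inr (Sum.inl o)) =
      L (Sum.elim y (fun _ : Fin 1 => α)) + R w := by
    intro o; funext j; rcases j with j | j | j <;>
      simp [hA, hLdef, hRdef, Lmap, Rmap]
  have hrow3 : ∀ j, A (Sum.inr (Sum.inr j)) = z j • L e₂ + R (C j) := by
    intro j; funext j'; rcases j' with j' | j' | j' <;>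
      simp [hA, hLdef, hRdef, Lmap, Rmap, he₂def]
  -- middle row auxiliary membership
  have hyα : (Sum.elim y (fun _ : Fin 1 => α) : Fin m ⊕ Fin 1 → F)
      ∈ Submodule.span F (Set.range M) := by
    have hL0 : ∀ u ∈ Submodule.span F (Set.range B),
        (Sum.elim u 0 : Fin m ⊕ Fin 1 → F) ∈ Submodule.span F (Set.range M) := by
      intro u hu
      induction hu using Submodule.span_induction with
      | mem v hv =>
        obtain ⟨i, rfl⟩ := hv
        have : (Sum.elim (B i) 0 : Fin m ⊕ Fin 1 → F) = M i - x i • e₂ := by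
          funext j; rcases j with j | j <;> simp [hM, he₂def]
        rw [this]
        exact sub_mem (Submodule.subset_span ⟨i, rfl⟩) (Submodule.smul_mem _ _ he₂)
      | zero =>
        have : (Sum.elim (0 : Fin m → F) 0 : Fin m ⊕ Fin 1 → F) = 0 := by
          funext j; rcases j with j | j <;> simp
        rw [this]; exact zero_mem _
      | add a b _ _ iha ihb =>
        have : (Sum.elim (a + b) 0 : Fin m ⊕ Fin 1 → F)
            = Sum.elim a 0 + Sum.elim b 0 := by
          funext j; rcases j with j | j <;> simp
        rw [this]; exact add_mem iha ihb
      | smul c a _ iha =>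
        have : (Sum.elim (c • a) 0 : Fin m ⊕ Fin 1 → F) = c • Sum.elim a 0 := by
          funext j; rcases j with j | j <;> simp
        rw [this]; exact Submodule.smul_mem _ _ iha
    have : (Sum.elim y (fun _ : Fin 1 => α) : Fin m ⊕ Fin 1 → F)
        = Sum.elim y 0 + α • e₂ := by
      funext j; rcases j with j | j <;> simp [he₂def]
    rw [this]
    exact add_mem (hL0 y hy) (Submodule.smul_mem _ _ he₂)
  -- span equality
  have hU_le : U ≤ Submodule.span F (Set.range A) := by
    rw [hUdef, Submodule.map_span]
    refine Submodule.span_le.mpr ?_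
    rintro _ ⟨_, ⟨i, rfl⟩, rfl⟩
    rw [← hrow1 i]
    exact Submodule.subset_span ⟨Sum.inl i, rfl⟩
  have hLe₂ : L e₂ ∈ Submodule.span F (Set.range A) :=
    hU_le (Submodule.mem_map_of_mem he₂)
  have hLyα : L (Sum.elim y (fun _ : Fin 1 => α)) ∈ Submodule.span F (Set.range A) :=
    hU_le (Submodule.mem_map_of_mem hyα)
  have hV_le : V ≤ Submodule.span F (Set.range A) := by
    rw [hVdef, Submodule.map_span]
    refine Submodule.span_le.mpr ?_
    rintro _ ⟨v, hv, rfl⟩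
    rcases hv with ⟨j, rfl⟩ | hv
    · have h : R (C j) = A (Sum.inr (Sum.inr j)) - z j • L e₂ := by
        rw [hrow3 j, add_sub_cancel_left]
      rw [h]
      exact sub_mem (Submodule.subset_span ⟨_, rfl⟩) (Submodule.smul_mem _ _ hLe₂)
    · rw [Set.mem_singleton_iff] at hv
      subst hv
      have h : R v = A (Sum.inr (Sum.inl 0)) - L (Sum.elim y (fun _ : Fin 1 => α)) := by
        rw [hrow2 0, add_sub_cancel_left]
      rw [h]
      exact sub_mem (Submodule.subset_span ⟨_, rfl⟩) hLyα
  have hspan : Submodule.span F (Set.range A) = U ⊔ V := by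
    refine le_antisymm ?_ (sup_le hU_le hV_le)
    refine Submodule.span_le.mpr ?_
    rintro _ ⟨i, rfl⟩
    rcases i with i | o | j
    · rw [hrow1 i]
      exact Submodule.mem_sup_left
        (Submodule.mem_map_of_mem (Submodule.subset_span ⟨i, rfl⟩))
    · rw [hrow2 o]
      exact add_mem (Submodule.mem_sup_left (Submodule.mem_map_of_mem hyα))
        (Submodule.mem_sup_right
          (Submodule.mem_map_of_mem (Submodule.subset_span (Or.inr rfl))))
    · rw [hrow3 j]
      exact add_mem
        (Submodule.mem_sup_left (Submodule.smul_mem _ _ (Submodule.mem_map_of_mem he₂)))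
        (Submodule.mem_sup_right
          (Submodule.mem_map_of_mem (Submodule.subset_span (Or.inl ⟨j, rfl⟩))))
  -- disjointness
  have hdisj : U ⊓ V = ⊥ := by
    rw [Submodule.eq_bot_iff]
    rintro g ⟨hgU, hgV⟩
    obtain ⟨a, _, rfl⟩ := hgU
    obtain ⟨b, _, hba⟩ := hgV
    funext j
    rcases j with j | j | j
    · exact (congrFun hba (Sum.inl j)).symm
    · exact (congrFun hba (Sum.inr (Sum.inl j))).symm
    · rfl
  -- finrank of U
  have hfinU : Module.finrank F ↥U = B.rank + 1 := by
    have h1 : Module.finrank F ↥U = Module.finrank F ↥(Submodule.span F (Set.range M)) :=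
      (((Submodule.span F (Set.range M)).equivMapOfInjective L Lmap_inj)).finrank_eq.symm
    have h3 : Mᵀ = Sum.elim Bᵀ (fun _ : Fin 1 => x) := by
      funext j i; rcases j with j | j <;> rfl
    have h4 : Mᵀ.rank = Module.finrank F ↥(Submodule.span F (Set.range Mᵀ)) :=
      Mᵀ.rank_eq_finrank_span_row
    rw [h3] at h4
    erw [Set.Sum.elim_range] at h4
    rw [Set.range_const, Submodule.span_union,
      aux_finrank_sup_span _ hx, ← (show Bᵀ.rank = Module.finrank F ↥(Submodule.span F (Set.range Bᵀ)) from
        Bᵀ.rank_eq_finrank_span_row), rank_transpose] at h4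
    rw [h1, ← (show M.rank = Module.finrank F ↥(Submodule.span F (Set.range M)) from
      M.rank_eq_finrank_span_row), ← rank_transpose, h3]
    exact h4
  -- conclusion
  have hArank : A.rank = Module.finrank F ↥U + Module.finrank F ↥V := by
    have hsum := Submodule.finrank_sup_add_finrank_inf_eq U V
    rw [hdisj, finrank_bot, add_zero] at hsum
    rw [(show A.rank = Module.finrank F ↥(Submodule.span F (Set.range A)) from
      A.rank_eq_finrank_span_row), hspan, hsum]
  constructor
  · intro hw
    have hVeq : Module.finrank F ↥V = C.rank := by
      have hs : Submodule.span F (Set.range C ∪ {w}) = Submodule.span F (Set.range C) := by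
        rw [Submodule.span_union, sup_eq_left]
        exact Submodule.span_le.mpr (Set.singleton_subset_iff.mpr hw)
      rw [hVdef, hs,
        (((Submodule.span F (Set.range C)).equivMapOfInjective R Rmap_inj)).finrank_eq.symm,
        ← (show C.rank = Module.finrank F ↥(Submodule.span F (Set.range C)) from
          C.rank_eq_finrank_span_row)]
    rw [hArank, hfinU, hVeq]
    omega
  · intro hw
    have hVeq : Module.finrank F ↥V = C.rank + 1 := by
      rw [hVdef,
        (((Submodule.span F (Set.range C ∪ {w})).equivMapOfInjective R Rmap_inj)).finrank_eq.symm,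
        Submodule.span_union, aux_finrank_sup_span _ hw, ← (show C.rank = Module.finrank F ↥(Submodule.span F (Set.range C)) from
          C.rank_eq_finrank_span_row)]
    rw [hArank, hfinU, hVeq]
    omega
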